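/- For all f, g : ℕ → ℝ one has, in [0,∞], ‖f+g‖_𝔹 ≤ 2·(‖f+g‖_{1,∞} + ‖f‖_{1,∞} + ‖g‖_{1,∞}) + ‖f‖_𝔹 + ‖g‖_𝔹. -/

import Mathlib

open Filter ENNReal
open scoped Classical

noncomputable section

/-- Coordinate projection onto a finite set of indices. -/
def proj (A : Finset ℕ) (f : ℕ → ℝ) : ℕ → ℝ := fun n => if n ∈ A then f n else 0

/-- Coordinate projection onto a set of indices. -/
def projSet (A : Set ℕ) (f : ℕ → ℝ) : ℕ → ℝ := fun n => if n ∈ A then f n else 0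

/-- `𝟙*_A(f) = ∑_{n ∈ A} f n`. -/
def oneStar (f : ℕ → ℝ) (A : Finset ℕ) : ℝ := ∑ n ∈ A, f n

/-- `A` is a greedy set of `f`. -/
def GreedySet (f : ℕ → ℝ) (A : Finset ℕ) : Prop :=
  ∀ n ∈ A, ∀ k, k ∉ A → |f k| ≤ |f n|

/-- `β(f,A) = sup_{I ∈ ℐ} |𝟙*_{I∖A}(f)| ∈ [0,∞]`, the sup running over all finite
integer intervals `I = [a,b]`. -/
def beta (f : ℕ → ℝ) (A : Finset ℕ) : ℝ≥0∞ :=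
  ⨆ a : ℕ, ⨆ b : ℕ, ENNReal.ofReal |oneStar f (Finset.Icc a b \ A)|

/-- `‖f‖_𝔹 = sup_{A ∈ 𝒢(f)} β(f,A) ∈ [0,∞]`. -/
def BNorm (f : ℕ → ℝ) : ℝ≥0∞ :=
  ⨆ A ∈ {A : Finset ℕ | GreedySet f A}, beta f A

/-- Membership in `𝔹`, i.e. `‖f‖_𝔹 < ∞`. -/
def MemB (f : ℕ → ℝ) : Prop := BNorm f < ⊤

/-- Membership in `c₀`. -/
def Memc0 (f : ℕ → ℝ) : Prop := Tendsto f atTop (nhds 0)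

/-- Membership in `𝔹₀`. -/
def MemB0 (f : ℕ → ℝ) : Prop :=
  Memc0 f ∧ ∀ ε : ℝ, 0 < ε → ∃ A : Finset ℕ, GreedySet f A ∧
    ∀ B : Finset ℕ, GreedySet f B → A ⊆ B → beta f B < ENNReal.ofReal ε

/-- The net `(𝟙*_A(f))_{A ∈ 𝒢(f)}`, directed by inclusion, converges to `s`. -/
def GreedyLim (f : ℕ → ℝ) (s : ℝ) : Prop :=
  ∀ ε : ℝ, 0 < ε → ∃ A : Finset ℕ, GreedySet f A ∧
    ∀ B : Finset ℕ, GreedySet f B → A ⊆ B → |oneStar f B - s| < ε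

/-- Membership in `𝔸`. -/
def MemA (f : ℕ → ℝ) : Prop := Memc0 f ∧ ∃ s, GreedyLim f s

/-- `σ_g(f)`, the greedy sum of `f` (junk value `0` if the greedy net does not converge). -/
def sigmaG (f : ℕ → ℝ) : ℝ := if h : ∃ s, GreedyLim f s then h.choose else 0

/-- `‖f‖_𝔸 = sup_{A ∈ 𝒢(f)} |σ_g(f) - 𝟙*_A(f)|`. -/
def ANorm (f : ℕ → ℝ) : ℝ≥0∞ :=
  ⨆ A ∈ {A : Finset ℕ | GreedySet f A}, ENNReal.ofReal |sigmaG f - oneStar f A|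

/-- The series `∑_n f n` converges (in the ordered sense) to `s`. -/
def SeriesLim (f : ℕ → ℝ) (s : ℝ) : Prop :=
  Tendsto (fun m => ∑ n ∈ Finset.range m, f n) atTop (nhds s)

/-- Membership in `𝒔`: the series `∑_n f n` converges. -/
def MemSeries (f : ℕ → ℝ) : Prop := ∃ s, SeriesLim f s

/-- `σ_s(f) = ∑_{n=0}^∞ f n` (junk value `0` if the series does not converge). -/
def sigmaS (f : ℕ → ℝ) : ℝ := if h : ∃ s, SeriesLim f s then h.choose else 0

/-- `‖f‖_𝒔 = sup_m |∑_{n = m}^∞ f n|`, expressed via `σ_s(f)` minus partial sums. -/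
def sNorm (f : ℕ → ℝ) : ℝ≥0∞ :=
  ⨆ m : ℕ, ENNReal.ofReal |sigmaS f - ∑ n ∈ Finset.range m, f n|

/-- `D(f)(m)`: the `m`-th term (for `m ≥ 1`) of the nonincreasing rearrangement of `|f|`,
as an element of `[0,∞]`. -/
def Drearr (f : ℕ → ℝ) (m : ℕ) : ℝ≥0∞ :=
  sInf {t : ℝ≥0∞ | {n : ℕ | t < ENNReal.ofReal |f n|}.Finite ∧
    {n : ℕ | t < ENNReal.ofReal |f n|}.ncard < m}

/-- `ρ_{1,∞}(f,k) = sup_{m ≥ 1} m · D(f)(m+k) ∈ [0,∞]`. Note `ρ_{1,∞}(f,0) = ‖f‖_{1,∞}`. -/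
def rho (f : ℕ → ℝ) (k : ℕ) : ℝ≥0∞ :=
  ⨆ m : ℕ, ⨆ _ : 1 ≤ m, (m : ℝ≥0∞) * Drearr f (m + k)

/-- Membership in `h_{1,∞}`: `lim_m m · D(f)(m) = 0`. -/
def Memh1inf (f : ℕ → ℝ) : Prop :=
  Tendsto (fun m : ℕ => (m : ℝ≥0∞) * Drearr f m) atTop (nhds 0)

/-- A sequence of nonempty finite integer intervals which is right-dominant:
`max J_k < min J_{k+1}` for all `k`. -/
def RightDominant (J : ℕ → Finset ℕ) : Prop :=
  (∀ k : ℕ, ∃ a b : ℕ, a ≤ b ∧ J k = Finset.Icc a b) ∧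
  ∀ k : ℕ, ∀ n ∈ J k, ∀ m ∈ J (k + 1), n < m

/-- `g` is Leibnizian with admissible sequence `J`. -/
def Admissible (g : ℕ → ℝ) (J : ℕ → Finset ℕ) : Prop :=
  RightDominant J ∧
  (∀ n : ℕ, g n ≠ 0 → ∃ k, n ∈ J k) ∧
  (∀ k : ℕ, oneStar g (J (k + 1)) ≤ oneStar g (J k)) ∧
  (∀ k : ℕ, ∀ n ∈ J k, g n ≠ 0 → ∀ m ∈ J (k + 1), g m < g n)

end

open scoped ENNReal

namespace Stmt10Aux

/-- Triangle for subtraction. -/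
lemma abs_sub_le' (a b : ℝ) : |a - b| ≤ |a| + |b| := by
  calc |a - b| = |a + (-b)| := by ring_nf
    _ ≤ |a| + |(-b)| := abs_add_le _ _
    _ = |a| + |b| := by rw [abs_neg]

lemma ofReal_abs_add (a b : ℝ) :
    ENNReal.ofReal |a + b| ≤ ENNReal.ofReal |a| + ENNReal.ofReal |b| :=
  (ENNReal.ofReal_le_ofReal (abs_add_le a b)).trans ENNReal.ofReal_add_le

lemma ofReal_abs_sub (a b : ℝ) :
    ENNReal.ofReal |a - b| ≤ ENNReal.ofReal |a| + ENNReal.ofReal |b| :=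
  (ENNReal.ofReal_le_ofReal (abs_sub_le' a b)).trans ENNReal.ofReal_add_le

/-- Bounding an `ofReal` of a finite sum of absolute values. -/
lemma ofReal_sum_abs_le (h : ℕ → ℝ) (s : Finset ℕ) (c : ℝ≥0∞)
    (hb : ∀ n ∈ s, ENNReal.ofReal |h n| ≤ c) :
    ENNReal.ofReal (∑ n ∈ s, |h n|) ≤ (s.card : ℝ≥0∞) * c := by
  rw [ENNReal.ofReal_sum_of_nonneg (fun n _ => abs_nonneg _)]
  calc ∑ n ∈ s, ENNReal.ofReal |h n| ≤ ∑ _n ∈ s, c := Finset.sum_le_sum hb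
    _ = (s.card : ℝ≥0∞) * c := by rw [Finset.sum_const, nsmul_eq_mul]

/-- Values outside a greedy set are dominated by the rearrangement. -/
lemma outside_le_Drearr (h : ℕ → ℝ) (A : Finset ℕ) (hA : GreedySet h A) {n : ℕ}
    (hn : n ∉ A) : ENNReal.ofReal |h n| ≤ Drearr h (A.card + 1) := by
  by_contra hlt
  push_neg at hlt
  rw [Drearr] at hlt
  obtain ⟨t, ⟨htfin, htcard⟩, ht⟩ := sInf_lt_iff.mp hlt
  have hsub : insert n (↑A : Set ℕ) ⊆ {k | t < ENNReal.ofReal |h k|} := by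
    intro k hk
    rcases Set.mem_insert_iff.mp hk with rfl | hk
    · exact ht
    · have hle : |h n| ≤ |h k| := hA k hk n hn
      exact lt_of_lt_of_le ht (ENNReal.ofReal_le_ofReal hle)
  have h1 : (insert n (↑A : Set ℕ)).ncard = A.card + 1 := by
    rw [Set.ncard_insert_of_notMem (by simpa using hn) (A.finite_toSet),
      Set.ncard_coe_finset]
  have h2 : (insert n (↑A : Set ℕ)).ncard ≤ {k | t < ENNReal.ofReal |h k|}.ncard :=
    Set.ncard_le_ncard hsub htfin
  omega

lemma mul_Drearr_le_rho (h : ℕ → ℝ) (N : ℕ) :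
    (N : ℝ≥0∞) * Drearr h (N + 1) ≤ rho h 0 := by
  have h1 : ((N + 1 : ℕ) : ℝ≥0∞) * Drearr h ((N + 1) + 0) ≤ rho h 0 :=
    le_iSup₂ (f := fun (m : ℕ) (_ : 1 ≤ m) => (m : ℝ≥0∞) * Drearr h (m + 0)) (N + 1)
      (Nat.succ_le_succ N.zero_le)
  refine le_trans ?_ h1
  push_cast
  simp only [add_zero]
  exact mul_le_mul_left (by exact le_self_add) _

lemma finite_of_rho (h : ℕ → ℝ) (hρ : rho h 0 ≠ ⊤) {ε : ℝ} (hε : 0 < ε) :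
    {n | ε ≤ |h n|}.Finite := by
  have hε0 : ENNReal.ofReal ε ≠ 0 := (ENNReal.ofReal_pos.mpr hε).ne'
  obtain ⟨m, hm⟩ := ENNReal.exists_nat_gt
    ((ENNReal.div_lt_top hρ hε0).ne)
  set m' := max m 1 with hm'
  have h1 : (1 : ℕ) ≤ m' := le_max_right _ _
  have hlt : rho h 0 < (m' : ℝ≥0∞) * ENNReal.ofReal ε := by
    have hdm : rho h 0 / ENNReal.ofReal ε * ENNReal.ofReal ε = rho h 0 :=
      ENNReal.div_mul_cancel hε0 ENNReal.ofReal_ne_top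
    calc rho h 0 = rho h 0 / ENNReal.ofReal ε * ENNReal.ofReal ε := hdm.symm
      _ < (m : ℝ≥0∞) * ENNReal.ofReal ε := by
          exact ENNReal.mul_lt_mul_left hε0 ENNReal.ofReal_ne_top hm
      _ ≤ (m' : ℝ≥0∞) * ENNReal.ofReal ε := by
          exact mul_le_mul_left (by exact_mod_cast le_max_left m 1) _
  have h2 : (m' : ℝ≥0∞) * Drearr h m' ≤ rho h 0 := by
    have := le_iSup₂ (f := fun (k : ℕ) (_ : 1 ≤ k) => (k : ℝ≥0∞) * Drearr h (k + 0)) m' h1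
    simpa [rho] using this
  have h3 : Drearr h m' < ENNReal.ofReal ε := by
    by_contra hc
    push_neg at hc
    have : (m' : ℝ≥0∞) * ENNReal.ofReal ε ≤ (m' : ℝ≥0∞) * Drearr h m' :=
      mul_le_mul_right hc _
    exact absurd (hlt.trans_le (this.trans h2)) (lt_irrefl _)
  rw [Drearr] at h3
  obtain ⟨t, ⟨htfin, _⟩, ht⟩ := sInf_lt_iff.mp h3
  refine htfin.subset fun n hn => ?_
  exact lt_of_lt_of_le ht (ENNReal.ofReal_le_ofReal hn)

lemma exists_max_outside (h : ℕ → ℝ)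
    (hfin : ∀ ε : ℝ, 0 < ε → {n | ε ≤ |h n|}.Finite) (B : Finset ℕ) :
    ∃ n₀, n₀ ∉ B ∧ ∀ k, k ∉ B → |h k| ≤ |h n₀| := by
  set m₀ := B.sup id + 1 with hm₀def
  have hm₀ : m₀ ∉ B := by
    intro hmem
    have := Finset.le_sup (f := id) hmem
    simp only [id] at this
    omega
  by_cases hall : ∀ k, k ∉ B → |h k| ≤ |h m₀|
  · exact ⟨m₀, hm₀, hall⟩
  push_neg at hall
  obtain ⟨k₁, hk₁B, hk₁⟩ := hall
  have hε : 0 < |h k₁| := lt_of_le_of_lt (abs_nonneg _) hk₁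
  have hT := hfin |h k₁| hε
  have hne : k₁ ∈ hT.toFinset \ B := by
    rw [Finset.mem_sdiff, Set.Finite.mem_toFinset]
    exact ⟨by simp only [Set.mem_setOf_eq]; exact le_rfl, hk₁B⟩
  obtain ⟨n₀, hn₀mem, hmax⟩ :=
    Finset.exists_max_image (hT.toFinset \ B) (fun n => |h n|) ⟨k₁, hne⟩
  have hn₀B : n₀ ∉ B := (Finset.mem_sdiff.mp hn₀mem).2
  have hn₀T : |h k₁| ≤ |h n₀| := by
    have := (Finset.mem_sdiff.mp hn₀mem).1
    rwa [Set.Finite.mem_toFinset] at this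
  refine ⟨n₀, hn₀B, fun k hk => ?_⟩
  by_cases hkT : k ∈ hT.toFinset \ B
  · exact hmax k hkT
  · have hnotk : ¬ (|h k₁| ≤ |h k|) := by
      intro hle
      exact hkT (Finset.mem_sdiff.mpr ⟨(Set.Finite.mem_toFinset _).mpr hle, hk⟩)
    linarith

lemma exists_greedy_card (h : ℕ → ℝ)
    (hfin : ∀ ε : ℝ, 0 < ε → {n | ε ≤ |h n|}.Finite) (N : ℕ) :
    ∃ B : Finset ℕ, GreedySet h B ∧ B.card = N := by
  induction N with
  | zero => exact ⟨∅, fun n hn => absurd hn (Finset.notMem_empty n), rfl⟩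
  | succ N ih =>
    obtain ⟨B, hB, hBc⟩ := ih
    obtain ⟨n₀, hn₀B, hmax⟩ := exists_max_outside h hfin B
    refine ⟨insert n₀ B, ?_, by rw [Finset.card_insert_of_notMem hn₀B, hBc]⟩
    intro n hn k hk
    simp only [Finset.mem_insert] at hn hk
    push_neg at hk
    rcases hn with rfl | hn
    · exact hmax k hk.2
    · exact hB n hn k hk.2

lemma beta_le_BNorm (h : ℕ → ℝ) (B : Finset ℕ) (hB : GreedySet h B) :
    beta h B ≤ BNorm h :=
  le_iSup₂ (f := fun A (_ : A ∈ {A : Finset ℕ | GreedySet h A}) => beta h A) B hB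

lemma ofReal_oneStar_le_beta (h : ℕ → ℝ) (B : Finset ℕ) (a b : ℕ) :
    ENNReal.ofReal |oneStar h (Finset.Icc a b \ B)| ≤ beta h B :=
  le_iSup₂ (f := fun a b => ENNReal.ofReal |oneStar h (Finset.Icc a b \ B)|) a b

end Stmt10Aux

theorem stmt_10 (f g : ℕ → ℝ) :
    BNorm (f + g) ≤ 2 * (rho (f + g) 0 + rho f 0 + rho g 0) + BNorm f + BNorm g := by
  classical
  rcases eq_or_ne (rho f 0) ⊤ with hf0 | hf0
  · have htop : (2:ℝ≥0∞) * (rho (f + g) 0 + rho f 0 + rho g 0) = ⊤ := by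
      rw [hf0]; simp
    rw [htop]; simp
  rcases eq_or_ne (rho g 0) ⊤ with hg0 | hg0
  · have htop : (2:ℝ≥0∞) * (rho (f + g) 0 + rho f 0 + rho g 0) = ⊤ := by
      rw [hg0]; simp
    rw [htop]; simp
  have hfin_f : ∀ ε : ℝ, 0 < ε → {n | ε ≤ |f n|}.Finite :=
    fun ε hε => Stmt10Aux.finite_of_rho f hf0 hε
  have hfin_g : ∀ ε : ℝ, 0 < ε → {n | ε ≤ |g n|}.Finite :=
    fun ε hε => Stmt10Aux.finite_of_rho g hg0 hε
  rw [BNorm]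
  refine iSup₂_le fun A hA => ?_
  have hA' : GreedySet (f + g) A := hA
  rw [beta]
  refine iSup_le fun a => iSup_le fun b => ?_
  obtain ⟨B, hB, hBcard⟩ := Stmt10Aux.exists_greedy_card f hfin_f A.card
  obtain ⟨C, hC, hCcard⟩ := Stmt10Aux.exists_greedy_card g hfin_g A.card
  set I := Finset.Icc a b with hI
  set u := I.filter (fun n => n ∈ B ∧ n ∈ C ∧ ¬ n ∈ A) with hu
  set v := I.filter (fun n => n ∈ B ∧ ¬ n ∈ C ∧ ¬ n ∈ A) with hv
  set w := I.filter (fun n => ¬ n ∈ B ∧ n ∈ C ∧ ¬ n ∈ A) with hw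
  set s2 := I.filter (fun n => n ∈ A ∧ ¬ n ∈ B) with hs2
  set s4 := I.filter (fun n => n ∈ A ∧ ¬ n ∈ C) with hs4
  -- the key algebraic identity
  have key : oneStar (f + g) (I \ A) =
      oneStar f (I \ B) + oneStar g (I \ C) +
      (oneStar (f + g) u + oneStar f v + oneStar g w - oneStar f s2 - oneStar g s4) := by
    have eA : I \ A = I.filter (fun n => ¬ n ∈ A) := by
      ext n; simp [Finset.mem_sdiff]
    have eB : I \ B = I.filter (fun n => ¬ n ∈ B) := by
      ext n; simp [Finset.mem_sdiff]
    have eC : I \ C = I.filter (fun n => ¬ n ∈ C) := by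
      ext n; simp [Finset.mem_sdiff]
    have pw : ∀ n ∈ I, (if ¬ n ∈ A then (f + g) n else 0) =
        ((if ¬ n ∈ B then f n else 0) + (if ¬ n ∈ C then g n else 0) +
          ((if n ∈ B ∧ n ∈ C ∧ ¬ n ∈ A then (f + g) n else 0) +
           (if n ∈ B ∧ ¬ n ∈ C ∧ ¬ n ∈ A then f n else 0) +
           (if ¬ n ∈ B ∧ n ∈ C ∧ ¬ n ∈ A then g n else 0) -
           (if n ∈ A ∧ ¬ n ∈ B then f n else 0) -
           (if n ∈ A ∧ ¬ n ∈ C then g n else 0))) := by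
      intro n _
      by_cases hA1 : n ∈ A <;> by_cases hB1 : n ∈ B <;> by_cases hC1 : n ∈ C <;>
        simp [hA1, hB1, hC1, Pi.add_apply] <;> ring
    rw [eA, eB, eC, hu, hv, hw, hs2, hs4]
    simp only [oneStar, Finset.sum_filter]
    rw [Finset.sum_congr rfl pw]
    simp only [Finset.sum_add_distrib, Finset.sum_sub_distrib]
  -- pointwise bounds on the correction sets
  have Hu : ENNReal.ofReal |oneStar (f + g) u| ≤
      (u.card : ℝ≥0∞) * Drearr (f + g) (A.card + 1) := by
    refine le_trans (ENNReal.ofReal_le_ofReal ?_)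
      (Stmt10Aux.ofReal_sum_abs_le (f + g) u _ ?_)
    · exact Finset.abs_sum_le_sum_abs _ _
    · intro n hn
      rw [hu, Finset.mem_filter] at hn
      exact Stmt10Aux.outside_le_Drearr (f + g) A hA' hn.2.2.2
  have Hv : ENNReal.ofReal |oneStar f v| ≤
      (v.card : ℝ≥0∞) * (Drearr (f + g) (A.card + 1) + Drearr g (A.card + 1)) := by
    refine le_trans (ENNReal.ofReal_le_ofReal ?_)
      (Stmt10Aux.ofReal_sum_abs_le f v _ ?_)
    · exact Finset.abs_sum_le_sum_abs _ _
    · intro n hn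
      rw [hv, Finset.mem_filter] at hn
      obtain ⟨-, hnB, hnC, hnA⟩ := hn
      have h1 : ENNReal.ofReal |(f + g) n| ≤ Drearr (f + g) (A.card + 1) :=
        Stmt10Aux.outside_le_Drearr (f + g) A hA' hnA
      have h2 : ENNReal.ofReal |g n| ≤ Drearr g (A.card + 1) := by
        have := Stmt10Aux.outside_le_Drearr g C hC hnC
        rwa [hCcard] at this
      have h3 : |f n| ≤ |(f + g) n| + |g n| := by
        have hfe : f n = (f n + g n) - g n := by ring
        calc |f n| = |(f n + g n) - g n| := by rw [← hfe]
          _ ≤ |f n + g n| + |g n| := Stmt10Aux.abs_sub_le' _ _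
          _ = |(f + g) n| + |g n| := by rw [Pi.add_apply]
      calc ENNReal.ofReal |f n| ≤ ENNReal.ofReal (|(f + g) n| + |g n|) :=
            ENNReal.ofReal_le_ofReal h3
        _ ≤ ENNReal.ofReal |(f + g) n| + ENNReal.ofReal |g n| := ENNReal.ofReal_add_le
        _ ≤ _ := add_le_add h1 h2
  have Hw : ENNReal.ofReal |oneStar g w| ≤
      (w.card : ℝ≥0∞) * (Drearr (f + g) (A.card + 1) + Drearr f (A.card + 1)) := by
    refine le_trans (ENNReal.ofReal_le_ofReal ?_)
      (Stmt10Aux.ofReal_sum_abs_le g w _ ?_)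
    · exact Finset.abs_sum_le_sum_abs _ _
    · intro n hn
      rw [hw, Finset.mem_filter] at hn
      obtain ⟨-, hnB, hnC, hnA⟩ := hn
      have h1 : ENNReal.ofReal |(f + g) n| ≤ Drearr (f + g) (A.card + 1) :=
        Stmt10Aux.outside_le_Drearr (f + g) A hA' hnA
      have h2 : ENNReal.ofReal |f n| ≤ Drearr f (A.card + 1) := by
        have := Stmt10Aux.outside_le_Drearr f B hB hnB
        rwa [hBcard] at this
      have h3 : |g n| ≤ |(f + g) n| + |f n| := by
        have hfe : g n = (f n + g n) - f n := by ring
        calc |g n| = |(f n + g n) - f n| := by rw [← hfe]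
          _ ≤ |f n + g n| + |f n| := Stmt10Aux.abs_sub_le' _ _
          _ = |(f + g) n| + |f n| := by rw [Pi.add_apply]
      calc ENNReal.ofReal |g n| ≤ ENNReal.ofReal (|(f + g) n| + |f n|) :=
            ENNReal.ofReal_le_ofReal h3
        _ ≤ ENNReal.ofReal |(f + g) n| + ENNReal.ofReal |f n| := ENNReal.ofReal_add_le
        _ ≤ _ := add_le_add h1 h2
  have Hs2 : ENNReal.ofReal |oneStar f s2| ≤
      (s2.card : ℝ≥0∞) * Drearr f (A.card + 1) := by
    refine le_trans (ENNReal.ofReal_le_ofReal ?_)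
      (Stmt10Aux.ofReal_sum_abs_le f s2 _ ?_)
    · exact Finset.abs_sum_le_sum_abs _ _
    · intro n hn
      rw [hs2, Finset.mem_filter] at hn
      have := Stmt10Aux.outside_le_Drearr f B hB hn.2.2
      rwa [hBcard] at this
  have Hs4 : ENNReal.ofReal |oneStar g s4| ≤
      (s4.card : ℝ≥0∞) * Drearr g (A.card + 1) := by
    refine le_trans (ENNReal.ofReal_le_ofReal ?_)
      (Stmt10Aux.ofReal_sum_abs_le g s4 _ ?_)
    · exact Finset.abs_sum_le_sum_abs _ _
    · intro n hn
      rw [hs4, Finset.mem_filter] at hn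
      have := Stmt10Aux.outside_le_Drearr g C hC hn.2.2
      rwa [hCcard] at this
  -- cardinality bounds
  have hdisj : Disjoint u v := by
    rw [Finset.disjoint_left]
    intro n hn hn'
    rw [hu, Finset.mem_filter] at hn
    rw [hv, Finset.mem_filter] at hn'
    exact hn'.2.2.1 hn.2.2.1
  have huv_sub : u ∪ v ⊆ B := by
    intro n hn
    rcases Finset.mem_union.mp hn with h | h
    · exact ((Finset.mem_filter.mp h).2).1
    · exact ((Finset.mem_filter.mp h).2).1
  have hcard_uv : u.card + v.card ≤ A.card := by
    calc u.card + v.card = (u ∪ v).card := (Finset.card_union_of_disjoint hdisj).symm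
      _ ≤ B.card := Finset.card_le_card huv_sub
      _ = A.card := hBcard
  have hw_le : w.card ≤ A.card := by
    have hsub : w ⊆ C := fun n hn => ((Finset.mem_filter.mp hn).2).2.1
    calc w.card ≤ C.card := Finset.card_le_card hsub
      _ = A.card := hCcard
  have hv_le : v.card ≤ A.card := by
    have hsub : v ⊆ B := fun n hn => ((Finset.mem_filter.mp hn).2).1
    calc v.card ≤ B.card := Finset.card_le_card hsub
      _ = A.card := hBcard
  have hs2_le : s2.card ≤ A.card :=
    Finset.card_le_card (fun n hn => ((Finset.mem_filter.mp hn).2).1)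
  have hs4_le : s4.card ≤ A.card :=
    Finset.card_le_card (fun n hn => ((Finset.mem_filter.mp hn).2).1)
  -- assembling everything
  have mid : (u.card : ℝ≥0∞) * Drearr (f + g) (A.card + 1) +
      (v.card : ℝ≥0∞) * (Drearr (f + g) (A.card + 1) + Drearr g (A.card + 1)) +
      (w.card : ℝ≥0∞) * (Drearr (f + g) (A.card + 1) + Drearr f (A.card + 1)) +
      (s2.card : ℝ≥0∞) * Drearr f (A.card + 1) +
      (s4.card : ℝ≥0∞) * Drearr g (A.card + 1) ≤
      2 * rho (f + g) 0 + 2 * rho f 0 + 2 * rho g 0 := by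
    have expand : (u.card : ℝ≥0∞) * Drearr (f + g) (A.card + 1) +
        (v.card : ℝ≥0∞) * (Drearr (f + g) (A.card + 1) + Drearr g (A.card + 1)) +
        (w.card : ℝ≥0∞) * (Drearr (f + g) (A.card + 1) + Drearr f (A.card + 1)) +
        (s2.card : ℝ≥0∞) * Drearr f (A.card + 1) +
        (s4.card : ℝ≥0∞) * Drearr g (A.card + 1) =
        ((u.card : ℝ≥0∞) + v.card + w.card) * Drearr (f + g) (A.card + 1) +
        ((w.card : ℝ≥0∞) + s2.card) * Drearr f (A.card + 1) +
        ((v.card : ℝ≥0∞) + s4.card) * Drearr g (A.card + 1) := by ring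
    rw [expand]
    have gen : ∀ (h : ℕ → ℝ) (k : ℕ), (k : ℝ≥0∞) ≤ ((2 * A.card : ℕ) : ℝ≥0∞) →
        (k : ℝ≥0∞) * Drearr h (A.card + 1) ≤ 2 * rho h 0 := by
      intro h k hk
      calc (k : ℝ≥0∞) * Drearr h (A.card + 1) ≤
          ((2 * A.card : ℕ) : ℝ≥0∞) * Drearr h (A.card + 1) := mul_le_mul_left hk _
        _ = 2 * ((A.card : ℝ≥0∞) * Drearr h (A.card + 1)) := by push_cast; ring
        _ ≤ 2 * rho h 0 := mul_le_mul_right (Stmt10Aux.mul_Drearr_le_rho h A.card) _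
    have b1 := gen (f + g) (u.card + v.card + w.card) (by
      push_cast
      have : u.card + v.card + w.card ≤ 2 * A.card := by omega
      exact_mod_cast this)
    have b2 := gen f (w.card + s2.card) (by
      push_cast
      have : w.card + s2.card ≤ 2 * A.card := by omega
      exact_mod_cast this)
    have b3 := gen g (v.card + s4.card) (by
      push_cast
      have : v.card + s4.card ≤ 2 * A.card := by omega
      exact_mod_cast this)
    push_cast at b1 b2 b3
    exact add_le_add (add_le_add b1 b2) b3
  calc ENNReal.ofReal |oneStar (f + g) (I \ A)|
      ≤ ENNReal.ofReal |oneStar f (I \ B) + oneStar g (I \ C)| +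
        ENNReal.ofReal |oneStar (f + g) u + oneStar f v + oneStar g w -
          oneStar f s2 - oneStar g s4| := by
        rw [key]; exact Stmt10Aux.ofReal_abs_add _ _
    _ ≤ (ENNReal.ofReal |oneStar f (I \ B)| + ENNReal.ofReal |oneStar g (I \ C)|) +
        (ENNReal.ofReal |oneStar (f + g) u| + ENNReal.ofReal |oneStar f v| +
         ENNReal.ofReal |oneStar g w| + ENNReal.ofReal |oneStar f s2| +
         ENNReal.ofReal |oneStar g s4|) := by
        refine add_le_add (Stmt10Aux.ofReal_abs_add _ _) ?_
        calc ENNReal.ofReal |oneStar (f + g) u + oneStar f v + oneStar g w -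
              oneStar f s2 - oneStar g s4|
            ≤ ENNReal.ofReal |oneStar (f + g) u + oneStar f v + oneStar g w -
                oneStar f s2| + ENNReal.ofReal |oneStar g s4| :=
              Stmt10Aux.ofReal_abs_sub _ _
          _ ≤ (ENNReal.ofReal |oneStar (f + g) u + oneStar f v + oneStar g w| +
                ENNReal.ofReal |oneStar f s2|) + ENNReal.ofReal |oneStar g s4| :=
              add_le_add_left (Stmt10Aux.ofReal_abs_sub _ _) _
          _ ≤ ((ENNReal.ofReal |oneStar (f + g) u + oneStar f v| +
                ENNReal.ofReal |oneStar g w|) + ENNReal.ofReal |oneStar f s2|) +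
                ENNReal.ofReal |oneStar g s4| :=
              add_le_add_left (add_le_add_left (Stmt10Aux.ofReal_abs_add _ _) _) _
          _ ≤ (((ENNReal.ofReal |oneStar (f + g) u| + ENNReal.ofReal |oneStar f v|) +
                ENNReal.ofReal |oneStar g w|) + ENNReal.ofReal |oneStar f s2|) +
                ENNReal.ofReal |oneStar g s4| :=
              add_le_add_left (add_le_add_left
                (add_le_add_left (Stmt10Aux.ofReal_abs_add _ _) _) _) _
    _ ≤ (beta f B + beta g C) +
        ((u.card : ℝ≥0∞) * Drearr (f + g) (A.card + 1) +
         (v.card : ℝ≥0∞) * (Drearr (f + g) (A.card + 1) + Drearr g (A.card + 1)) +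
         (w.card : ℝ≥0∞) * (Drearr (f + g) (A.card + 1) + Drearr f (A.card + 1)) +
         (s2.card : ℝ≥0∞) * Drearr f (A.card + 1) +
         (s4.card : ℝ≥0∞) * Drearr g (A.card + 1)) := by
        refine add_le_add (add_le_add ?_ ?_)
          (add_le_add (add_le_add (add_le_add (add_le_add Hu Hv) Hw) Hs2) Hs4)
        · rw [hI]; exact Stmt10Aux.ofReal_oneStar_le_beta f B a b
        · rw [hI]; exact Stmt10Aux.ofReal_oneStar_le_beta g C a b
    _ ≤ (BNorm f + BNorm g) + (2 * rho (f + g) 0 + 2 * rho f 0 + 2 * rho g 0) :=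
        add_le_add (add_le_add (Stmt10Aux.beta_le_BNorm f B hB)
          (Stmt10Aux.beta_le_BNorm g C hC)) mid
    _ = 2 * (rho (f + g) 0 + rho f 0 + rho g 0) + BNorm f + BNorm g := by ring
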